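/- Let Δ be a positive invertible self-adjoint operator with compact resolvent on a Hilbert space H, and let X be an operator such that X Δ^{-a} is trace class for some real a. Then the function ζ(z) = Trace(X Δ^{-z}) is holomorphic on the half-plane {Re(z) > a}, with derivative ζ'(z) = -Trace(X log(Δ) Δ^{-z}). -/

import Mathlib

/-- If `X Δ^{-a}` is trace class, then `ζ(z) = Trace(X Δ^{-z})` is holomorphic on
`{Re z > a}` with derivative `-Trace(X log(Δ) Δ^{-z})`.  Here `Δ` is presented by its
spectral data (Hilbert basis of eigenvectors `e`, eigenvalues `lam`), and the trace
is the sum of diagonal matrix coefficients. -/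
theorem zeta_holomorphic {H : Type*} [NormedAddCommGroup H]
    [InnerProductSpace ℂ H] [CompleteSpace H]
    (e : HilbertBasis ℕ ℂ H) (lam : ℕ → ℝ)
    (hpos : ∀ n, 0 < lam n) (hinv : ∃ c > 0, ∀ n, c ≤ lam n)
    (hcpt : Filter.Tendsto lam Filter.atTop Filter.atTop)
    (X : H →L[ℂ] H) (a : ℝ)
    (htrace : Summable fun n => (lam n) ^ (-a) * ‖X (e n)‖) :
    ∀ z : ℂ, a < z.re →
      HasDerivAt
        (fun w : ℂ => ∑' n, (lam n : ℂ) ^ (-w) * (inner ℂ (e n) (X (e n)) : ℂ))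
        (-∑' n, (Real.log (lam n) : ℂ) * (lam n : ℂ) ^ (-z) *
          (inner ℂ (e n) (X (e n)) : ℂ)) z := by
  intro z hz
  obtain ⟨c, hc, hcle⟩ := hinv
  -- summability of lam^(-t) * ‖X e n‖ for any t > a
  have hsum : ∀ t : ℝ, a < t → Summable (fun n => lam n ^ (-t) * ‖X (e n)‖) := by
    intro t ht
    apply Summable.of_nonneg_of_le
      (fun n => mul_nonneg (Real.rpow_nonneg (hpos n).le _) (norm_nonneg _))
      (f := fun n => c ^ (a - t) * (lam n ^ (-a) * ‖X (e n)‖))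
      ?_ (htrace.mul_left _)
    intro n
    have h1 : lam n ^ (-t) = lam n ^ (a - t) * lam n ^ (-a) := by
      rw [← Real.rpow_add (hpos n)]; ring_nf
    have h2 : lam n ^ (a - t) ≤ c ^ (a - t) :=
      Real.rpow_le_rpow_of_nonpos hc (hcle n) (by linarith)
    rw [h1]
    calc lam n ^ (a - t) * lam n ^ (-a) * ‖X (e n)‖
        ≤ c ^ (a - t) * lam n ^ (-a) * ‖X (e n)‖ := by
          apply mul_le_mul_of_nonneg_right (mul_le_mul_of_nonneg_right h2
            (Real.rpow_nonneg (hpos n).le _)) (norm_nonneg _)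
      _ = c ^ (a - t) * (lam n ^ (-a) * ‖X (e n)‖) := by ring
  -- inner product bound
  have hinner : ∀ n, ‖(inner ℂ (e n) (X (e n)) : ℂ)‖ ≤ ‖X (e n)‖ := by
    intro n
    calc ‖(inner ℂ (e n) (X (e n)) : ℂ)‖ ≤ ‖e n‖ * ‖X (e n)‖ := norm_inner_le_norm _ _
      _ = ‖X (e n)‖ := by rw [e.orthonormal.1 n, one_mul]
  have hcpown : ∀ n (w : ℂ), ‖(lam n : ℂ) ^ (-w)‖ = lam n ^ (-w.re) := by
    intro n w
    rw [Complex.norm_cpow_eq_rpow_re_of_pos (hpos n)]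
    simp
  -- setup strip
  set b : ℝ := (a + z.re) / 2 with hbdef
  set R : ℝ := z.re + 1 with hRdef
  have hab : a < b := by simp only [hbdef]; linarith
  have hbz : b < z.re := by simp only [hbdef]; linarith
  set ε : ℝ := (b - a) / 2 with hεdef
  have hε : 0 < ε := by simp only [hεdef]; linarith
  set s : Set ℂ := {w : ℂ | b < w.re ∧ w.re < R} with hsdef
  have hs_open : IsOpen s := by
    have : s = Complex.re ⁻¹' Set.Ioo b R := by ext w; simp [hsdef, Set.mem_Ioo]
    rw [this]; exact isOpen_Ioo.preimage Complex.continuous_re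
  have hs_conn : IsPreconnected s := by
    have : Convex ℝ s := by
      have : s = Complex.reLm ⁻¹' Set.Ioo b R := by ext w; simp [hsdef, Set.mem_Ioo]
      rw [this]; exact (convex_Ioo b R).linear_preimage _
    exact this.isPreconnected
  have hzs : z ∈ s := ⟨hbz, by simp [hRdef]⟩
  -- bound |log λ| ≤ (λ^ε + λ^(-ε))/ε
  have hlog : ∀ n, |Real.log (lam n)| ≤ (lam n ^ ε + lam n ^ (-ε)) / ε := by
    intro n
    rcases le_or_gt 1 (lam n) with h1 | h1
    · rw [abs_of_nonneg (Real.log_nonneg h1)]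
      calc Real.log (lam n) ≤ lam n ^ ε / ε := Real.log_le_rpow_div (hpos n).le hε
        _ ≤ (lam n ^ ε + lam n ^ (-ε)) / ε := by
            apply div_le_div_of_nonneg_right ?_ hε.le |>.trans_eq rfl
            linarith [Real.rpow_nonneg (hpos n).le (-ε)]
    · rw [abs_of_nonpos (Real.log_nonpos (hpos n).le h1.le)]
      have : -Real.log (lam n) = Real.log (lam n)⁻¹ := (Real.log_inv _).symm
      rw [this]
      calc Real.log (lam n)⁻¹ ≤ (lam n)⁻¹ ^ ε / ε :=
            Real.log_le_rpow_div (inv_nonneg.mpr (hpos n).le) hε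
        _ = lam n ^ (-ε) / ε := by
            rw [Real.inv_rpow (hpos n).le, ← Real.rpow_neg (hpos n).le]
        _ ≤ (lam n ^ ε + lam n ^ (-ε)) / ε := by
            apply div_le_div_of_nonneg_right ?_ hε.le |>.trans_eq rfl
            linarith [Real.rpow_nonneg (hpos n).le ε]
  -- bound λ^(-re w) ≤ λ^(-b) + λ^(-R) on the strip
  have hstrip : ∀ n, ∀ w ∈ s, lam n ^ (-w.re) ≤ lam n ^ (-b) + lam n ^ (-R) := by
    intro n w hw
    rcases le_or_gt 1 (lam n) with h1 | h1
    · have : lam n ^ (-w.re) ≤ lam n ^ (-b) :=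
        Real.rpow_le_rpow_of_exponent_le h1 (by linarith [hw.1])
      linarith [Real.rpow_nonneg (hpos n).le (-R)]
    · have : lam n ^ (-w.re) ≤ lam n ^ (-R) :=
        Real.rpow_le_rpow_of_exponent_ge (hpos n) h1.le (by linarith [hw.2])
      linarith [Real.rpow_nonneg (hpos n).le (-b)]
  -- the dominating summable sequence
  set u : ℕ → ℝ := fun n =>
    ε⁻¹ * ((lam n ^ (-(b - ε)) + lam n ^ (-(b + ε)) + lam n ^ (-(R - ε))
      + lam n ^ (-(R + ε))) * ‖X (e n)‖) with hudef
  have hu : Summable u := by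
    apply Summable.mul_left
    have h1 : a < b - ε := by simp only [hεdef]; linarith
    have h2 : a < b + ε := by linarith
    have h3 : a < R - ε := by simp only [hRdef]; linarith
    have h4 : a < R + ε := by linarith
    have := ((((hsum _ h1).add (hsum _ h2)).add (hsum _ h3)).add (hsum _ h4))
    convert this using 2 with n
    · rfl
    ring
  -- derivative of each term
  set g' : ℕ → ℂ → ℂ := fun n w =>
    -(Real.log (lam n) : ℂ) * (lam n : ℂ) ^ (-w) * (inner ℂ (e n) (X (e n)) : ℂ) with hg'def
  have hderiv : ∀ n (w : ℂ),
      HasDerivAt (fun w : ℂ => (lam n : ℂ) ^ (-w) * (inner ℂ (e n) (X (e n)) : ℂ))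
        (g' n w) w := by
    intro n w
    have hne : (lam n : ℂ) ≠ 0 := by
      simp only [ne_eq, Complex.ofReal_eq_zero]; exact (hpos n).ne'
    have h1 : HasDerivAt (fun w : ℂ => -w) (-1) w := (hasDerivAt_id w).neg
    have h2 := (h1.const_cpow (c := (lam n : ℂ)) (Or.inl hne)).mul_const
      (inner ℂ (e n) (X (e n)) : ℂ)
    refine h2.congr_deriv ?_
    rw [← Complex.ofReal_log (hpos n).le]
    ring
  -- norm bound on derivatives over the strip
  have hbound : ∀ n, ∀ w ∈ s, ‖g' n w‖ ≤ u n := by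
    intro n w hw
    have hln : 0 < lam n := hpos n
    rw [hg'def]
    simp only [norm_mul, norm_neg, Complex.norm_real, Real.norm_eq_abs, hcpown]
    calc |Real.log (lam n)| * lam n ^ (-w.re) * ‖(inner ℂ (e n) (X (e n)) : ℂ)‖
        ≤ ((lam n ^ ε + lam n ^ (-ε)) / ε) * (lam n ^ (-b) + lam n ^ (-R)) * ‖X (e n)‖ := by
          apply mul_le_mul (mul_le_mul (hlog n) (hstrip n w hw)
            (Real.rpow_nonneg hln.le _) (by positivity)) (hinner n) (norm_nonneg _)
            (by positivity)
      _ = u n := by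
          simp only [hudef]
          have e1 : lam n ^ ε * lam n ^ (-b) = lam n ^ (-(b - ε)) := by
            rw [← Real.rpow_add hln]; ring_nf
          have e2 : lam n ^ (-ε) * lam n ^ (-b) = lam n ^ (-(b + ε)) := by
            rw [← Real.rpow_add hln]; ring_nf
          have e3 : lam n ^ ε * lam n ^ (-R) = lam n ^ (-(R - ε)) := by
            rw [← Real.rpow_add hln]; ring_nf
          have e4 : lam n ^ (-ε) * lam n ^ (-R) = lam n ^ (-(R + ε)) := by
            rw [← Real.rpow_add hln]; ring_nf
          rw [← e1, ← e2, ← e3, ← e4, div_eq_mul_inv]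
          ring
  -- summability at z
  have hsum0 : Summable (fun n => (lam n : ℂ) ^ (-z) * (inner ℂ (e n) (X (e n)) : ℂ)) := by
    apply Summable.of_norm
    apply Summable.of_nonneg_of_le (fun n => norm_nonneg _)
      (f := fun n => lam n ^ (-z.re) * ‖X (e n)‖) ?_ (hsum _ hz)
    intro n
    rw [norm_mul, hcpown]
    exact mul_le_mul_of_nonneg_left (hinner n) (Real.rpow_nonneg (hpos n).le _)
  have := hasDerivAt_tsum_of_isPreconnected hu hs_open hs_conn
    (fun n w _ => hderiv n w) hbound hzs hsum0 hzs
  refine this.congr_deriv ?_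
  rw [← tsum_neg]
  congr 1
  ext n
  rw [hg'def]
  ring
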